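/- arXiv:2307.10999 — 2 statements merged into one kernel-verified Lean document; each statement's English description precedes it below -/
import Mathlib

section
/- Let d, P, k ≥ 1 be integers with k ≤ d, let 0 < α ≤ 1, and let C be an integer with C ≥ max(8Pk, 8k/(Pα)). For the random count-mean sketch with parameters (P, C), every z ∈ ℝ^d, and every coordinate q ∈ {1,…,d}: P[ ((SᵀSz)_q − z_q)² > α·‖z_tail(k)‖²/k ] ≤ 1/4. -/
open MeasureTheory ProbabilityTheory
open scoped ENNReal NNReal

noncomputable section

/-- Uniform probability measure on a finite type. -/
def unifMeasure (α : Type*) [Fintype α] [MeasurableSpace α] : Measure α :=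
  (Fintype.card α : ℝ≥0∞)⁻¹ • Measure.count

/-- Randomness of a count-mean sketch with parameters `(P, C)` on `ℝ^d`:
for each `p : Fin P` a hash function `h_p : Fin d → Fin C` and sign bits `s_p : Fin d → Bool`,
all mutually independent and uniform (hence jointly: the uniform measure on this type). -/
abbrev SketchSpace (d P C : ℕ) : Type :=
  (Fin P → Fin d → Fin C) × (Fin P → Fin d → Bool)

/-- Sign associated to a boolean. -/
def sgn (b : Bool) : ℝ := if b then 1 else -1

/-- The count-mean sketch `S z ∈ ℝ^{P×C}`:
`(S z)_{(p,c)} = (1/√P) ∑ i, s_p(i)·1[h_p(i)=c]·z_i`. -/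
def Sk {d P C : ℕ} (ω : SketchSpace d P C) (z : Fin d → ℝ) : Fin P × Fin C → ℝ :=
  fun pc => (Real.sqrt P)⁻¹ *
    ∑ i : Fin d, sgn (ω.2 pc.1 i) * (if ω.1 pc.1 i = pc.2 then (1 : ℝ) else 0) * z i

/-- `Sᵀ y ∈ ℝ^d`: `(Sᵀ y)_q = (1/√P) ∑ p, s_p(q)·y_{(p, h_p(q))}`. -/
def SkT {d P C : ℕ} (ω : SketchSpace d P C) (y : Fin P × Fin C → ℝ) : Fin d → ℝ :=
  fun q => (Real.sqrt P)⁻¹ * ∑ p : Fin P, sgn (ω.2 p q) * y (p, ω.1 p q)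

/-- Euclidean (ℓ₂) norm on `ℝ^d`. -/
def norm2 {d : ℕ} (z : Fin d → ℝ) : ℝ := Real.sqrt (∑ i, (z i) ^ 2)

/-- `w` has at most `k` nonzero coordinates. -/
def sparse {d : ℕ} (k : ℕ) (w : Fin d → ℝ) : Prop :=
  ∃ I : Finset (Fin d), I.card ≤ k ∧ ∀ i ∉ I, w i = 0

/-- The tail norm `‖z_tail(k)‖`: the minimum of `‖z - w‖₂` over `k`-sparse `w`. -/
def tailNorm {d : ℕ} (k : ℕ) (z : Fin d → ℝ) : ℝ :=
  sInf {t : ℝ | ∃ w : Fin d → ℝ, sparse k w ∧ t = norm2 (fun i => z i - w i)}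

/-- `w` is a top-`m` truncation of `v`: it keeps the entries of `v` on a set `I` of `m`
coordinates of largest absolute value and zeroes out the rest. -/
def IsTopTrunc {d : ℕ} (m : ℕ) (v w : Fin d → ℝ) : Prop :=
  ∃ I : Finset (Fin d), I.card = m ∧ (∀ i ∈ I, ∀ j ∉ I, |v j| ≤ |v i|) ∧
    (∀ i ∈ I, w i = v i) ∧ ∀ i ∉ I, w i = 0

/-- Symmetric median: the midpoint of the `⌈R/2⌉`-th and `(⌊R/2⌋+1)`-th smallest entries. -/
def med {R : ℕ} (x : Fin R → ℝ) : ℝ :=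
  if h : R = 0 then 0
  else (x (Tuple.sort x ⟨(R + 1) / 2 - 1, by omega⟩) + x (Tuple.sort x ⟨R / 2, by omega⟩)) / 2

/-- Randomness of a count-median-of-means sketch: `R` independent count-mean sketches. -/
abbrev MoMSpace (d P C R : ℕ) : Type := Fin R → SketchSpace d P C

/-- Median-of-means unsketching: `U(y)_q = med_r ((S^{(r)})ᵀ y^{(r)})_q`. -/
def MoMU {d P C R : ℕ} (ω : MoMSpace d P C R) (y : Fin R → Fin P × Fin C → ℝ) : Fin d → ℝ :=
  fun q => med fun r => SkT (ω r) (y r) q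

section AuxCMS

open Finset

lemma CMS.sgn_sq (b : Bool) : sgn b * sgn b = 1 := by cases b <;> simp [sgn]
lemma CMS.sgn_not (b : Bool) : sgn (!b) = - sgn b := by cases b <;> simp [sgn]

lemma CMS.sum_eq_zero_of_neg {ι : Type*} [Fintype ι] (σ : Equiv.Perm ι) (F : ι → ℝ)
    (h : ∀ x, F (σ x) = -F x) : ∑ x, F x = 0 := by
  have h1 : ∑ x, F (σ x) = ∑ x, F x := Equiv.sum_comp σ F
  have h2 : ∑ x, F (σ x) = -∑ x, F x := by
    rw [← Finset.sum_neg_distrib]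
    exact Finset.sum_congr rfl fun x _ => h x
  linarith

def CMS.bflip {P d : ℕ} (p0 : Fin P) (j0 : Fin d) : Equiv.Perm (Fin P → Fin d → Bool) :=
  Function.Involutive.toPerm (fun s => fun p j => if p = p0 ∧ j = j0 then !(s p j) else s p j)
    (by intro s; funext p j; by_cases h : p = p0 ∧ j = j0 <;> simp [h])

lemma CMS.bflip_apply {P d : ℕ} (p0 : Fin P) (j0 : Fin d) (s : Fin P → Fin d → Bool)
    (p : Fin P) (j : Fin d) :
    CMS.bflip p0 j0 s p j = if p = p0 ∧ j = j0 then !(s p j) else s p j := rfl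

lemma CMS.sign_orth {P d : ℕ} (p p' : Fin P) (q i i' : Fin d) (hi : i ≠ q) (hi' : i' ≠ q) :
    ∑ s : Fin P → Fin d → Bool,
      (sgn (s p q) * sgn (s p i)) * (sgn (s p' q) * sgn (s p' i'))
    = if (p, i) = (p', i') then (Fintype.card (Fin P → Fin d → Bool) : ℝ) else 0 := by
  by_cases hpp : (p, i) = (p', i')
  · rw [Prod.mk.injEq] at hpp
    obtain ⟨rfl, rfl⟩ := hpp
    rw [if_pos rfl]
    have key : ∀ s : Fin P → Fin d → Bool,
        (sgn (s p q) * sgn (s p i)) * (sgn (s p q) * sgn (s p i)) = 1 := fun s => by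
      rw [mul_mul_mul_comm, CMS.sgn_sq, CMS.sgn_sq, mul_one]
    simp [key]
  · rw [if_neg hpp]
    rcases eq_or_ne p p' with rfl | hp
    · have hii : i ≠ i' := fun h => hpp (by rw [h])
      apply CMS.sum_eq_zero_of_neg (CMS.bflip p i)
      intro s
      have e1 : CMS.bflip p i s p q = s p q := by
        rw [CMS.bflip_apply, if_neg]; exact fun h => hi (h.2.symm)
      have e2 : CMS.bflip p i s p i = !(s p i) := by rw [CMS.bflip_apply, if_pos ⟨rfl, rfl⟩]
      have e3 : CMS.bflip p i s p i' = s p i' := by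
        rw [CMS.bflip_apply, if_neg]; exact fun h => hii (h.2.symm)
      rw [e1, e2, e3, CMS.sgn_not]; ring
    · apply CMS.sum_eq_zero_of_neg (CMS.bflip p q)
      intro s
      have e1 : CMS.bflip p q s p q = !(s p q) := by rw [CMS.bflip_apply, if_pos ⟨rfl, rfl⟩]
      have e2 : CMS.bflip p q s p i = s p i := by
        rw [CMS.bflip_apply, if_neg]; exact fun h => hi h.2
      have e3 : ∀ j, CMS.bflip p q s p' j = s p' j := fun j => by
        rw [CMS.bflip_apply, if_neg]; exact fun h => hp h.1.symm
      rw [e1, e2, e3, e3, CMS.sgn_not]; ring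

lemma CMS.sum_collision {ι κ : Type*} [Fintype ι] [DecidableEq ι] [Fintype κ] [DecidableEq κ]
    [Nonempty κ] (a b : ι) (hab : a ≠ b) (c : ℝ) :
    ∑ f : ι → κ, (if f a = f b then c else 0)
      = (Fintype.card (ι → κ) : ℝ) / (Fintype.card κ) * c := by
  classical
  rw [← Equiv.sum_comp (Equiv.funSplitAt a κ).symm
      (fun f => if f a = f b then c else 0)]
  have hb : ∀ x : κ × ({ j // j ≠ a } → κ),
      ((Equiv.funSplitAt a κ).symm x) a = x.1 := by
    intro x; simp [Equiv.funSplitAt, Equiv.piSplitAt]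
  have hb2 : ∀ x : κ × ({ j // j ≠ a } → κ),
      ((Equiv.funSplitAt a κ).symm x) b = x.2 ⟨b, Ne.symm hab⟩ := by
    intro x; simp [Equiv.funSplitAt, Equiv.piSplitAt, Ne.symm hab]
  rw [Fintype.sum_prod_type]
  have key : ∀ x1 : κ, ∀ x2 : { j // j ≠ a } → κ,
      (if ((Equiv.funSplitAt a κ).symm (x1, x2)) a = ((Equiv.funSplitAt a κ).symm (x1, x2)) b
        then c else 0) = if x1 = x2 ⟨b, Ne.symm hab⟩ then c else 0 := by
    intro x1 x2; rw [hb (x1, x2), hb2 (x1, x2)]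
  simp only [key]
  rw [Finset.sum_comm]
  have inner : ∀ x2 : { j // j ≠ a } → κ,
      ∑ x1 : κ, (if x1 = x2 ⟨b, Ne.symm hab⟩ then c else 0) = c := by
    intro x2; simp
  simp only [inner, Finset.sum_const, card_univ, nsmul_eq_mul]
  have hcard : (Fintype.card (ι → κ) : ℝ)
      = Fintype.card ({ j // j ≠ a } → κ) * Fintype.card κ := by
    rw [Fintype.card_fun, Fintype.card_fun]
    have h1 : Fintype.card { j // j ≠ a } = Fintype.card ι - 1 := by
      rw [Fintype.card_subtype_compl, Fintype.card_subtype_eq]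
    have h2 : 1 ≤ Fintype.card ι := Fintype.card_pos_iff.mpr ⟨a⟩
    rw [h1]
    push_cast
    rw [← pow_succ]
    congr 1
    omega
  rw [hcard]
  have hk : (Fintype.card κ : ℝ) ≠ 0 := by exact_mod_cast Fintype.card_ne_zero
  field_simp

lemma CMS.sum_collision_H {P d C : ℕ} (hC : 0 < C) (p : Fin P) (i q : Fin d) (hiq : i ≠ q)
    (c : ℝ) :
    ∑ h : Fin P → Fin d → Fin C, (if h p i = h p q then c else 0)
      = (Fintype.card (Fin P → Fin d → Fin C) : ℝ) / C * c := by
  have : Nonempty (Fin C) := ⟨⟨0, hC⟩⟩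
  rw [← Equiv.sum_comp (Equiv.curry (Fin P) (Fin d) (Fin C))
      (fun h => if h p i = h p q then c else 0)]
  have h1 : (∑ g : Fin P × Fin d → Fin C,
        (if (Equiv.curry (Fin P) (Fin d) (Fin C)) g p i
            = (Equiv.curry (Fin P) (Fin d) (Fin C)) g p q then c else 0))
      = ∑ g : Fin P × Fin d → Fin C, (if g (p, i) = g (p, q) then c else 0) := rfl
  rw [h1, CMS.sum_collision (p, i) (p, q) (fun hc => hiq (congrArg Prod.snd hc)) c,
    Fintype.card_congr (Equiv.curry (Fin P) (Fin d) (Fin C)), Fintype.card_fin]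

lemma CMS.exists_topk {d k : ℕ} (hkd : k ≤ d) (z : Fin d → ℝ) :
    ∃ I : Finset (Fin d), I.card = k ∧
      ∀ J : Finset (Fin d), J.card ≤ k → ∑ i ∈ J, z i ^ 2 ≤ ∑ i ∈ I, z i ^ 2 := by
  classical
  have hcardu : k ≤ (Finset.univ : Finset (Fin d)).card := by
    simpa using hkd
  obtain ⟨u, -, -, hu⟩ := Finset.exists_subsuperset_card_eq
    (Finset.empty_subset (Finset.univ : Finset (Fin d))) (by simp) hcardu
  have hne : (Finset.univ.powersetCard k (α := Fin d)).Nonempty :=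
    ⟨u, Finset.mem_powersetCard.mpr ⟨Finset.subset_univ _, hu⟩⟩
  obtain ⟨I, hImem, hImax⟩ := Finset.exists_max_image _ (fun J => ∑ i ∈ J, z i ^ 2) hne
  obtain ⟨-, hIcard⟩ := Finset.mem_powersetCard.mp hImem
  refine ⟨I, hIcard, fun J hJ => ?_⟩
  obtain ⟨J', hJJ', -, hJ'⟩ := Finset.exists_subsuperset_card_eq (Finset.subset_univ J) hJ hcardu
  calc ∑ i ∈ J, z i ^ 2 ≤ ∑ i ∈ J', z i ^ 2 :=
        Finset.sum_le_sum_of_subset_of_nonneg hJJ' (fun i _ _ => sq_nonneg _)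
    _ ≤ ∑ i ∈ I, z i ^ 2 :=
        hImax J' (Finset.mem_powersetCard.mpr ⟨Finset.subset_univ _, hJ'⟩)

end AuxCMS

lemma CMS.tailNorm_nonneg {d k : ℕ} (z : Fin d → ℝ) : 0 ≤ tailNorm k z := by
  apply Real.sInf_nonneg
  rintro t ⟨w, -, rfl⟩
  exact Real.sqrt_nonneg _

lemma CMS.tail_sq_le {d k : ℕ} (z : Fin d → ℝ) (I : Finset (Fin d)) (hIk : I.card = k)
    (hImax : ∀ J : Finset (Fin d), J.card ≤ k → ∑ i ∈ J, z i ^ 2 ≤ ∑ i ∈ I, z i ^ 2) :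
    ∑ i ∈ Finset.univ \ I, z i ^ 2 ≤ tailNorm k z ^ 2 := by
  classical
  set A := ∑ i ∈ Finset.univ \ I, z i ^ 2 with hA
  have hA0 : 0 ≤ A := Finset.sum_nonneg fun i _ => sq_nonneg _
  have hlb : Real.sqrt A ≤ tailNorm k z := by
    apply le_csInf
    · exact ⟨_, ⟨fun i => if i ∈ I then z i else 0,
        ⟨I, le_of_eq hIk, fun i hi => if_neg hi⟩, rfl⟩⟩
    · rintro t ⟨w, ⟨J, hJk, hJ0⟩, rfl⟩
      unfold norm2
      apply Real.sqrt_le_sqrt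
      calc A ≤ ∑ i ∈ Finset.univ \ J, z i ^ 2 := by
              have h1 := hImax J hJk
              have e1 : ∑ i ∈ Finset.univ \ I, z i ^ 2
                  = (∑ i, z i ^ 2) - ∑ i ∈ I, z i ^ 2 :=
                Finset.sum_sdiff_eq_sub (Finset.subset_univ I)
              have e2 : ∑ i ∈ Finset.univ \ J, z i ^ 2
                  = (∑ i, z i ^ 2) - ∑ i ∈ J, z i ^ 2 :=
                Finset.sum_sdiff_eq_sub (Finset.subset_univ J)
              rw [hA, e1, e2]; linarith
        _ = ∑ i ∈ Finset.univ \ J, (z i - w i) ^ 2 := by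
              apply Finset.sum_congr rfl; intro i hi
              rw [hJ0 i (by simpa using (Finset.mem_sdiff.mp hi).2), sub_zero]
        _ ≤ ∑ i, (z i - w i) ^ 2 :=
              Finset.sum_le_sum_of_subset_of_nonneg Finset.sdiff_subset
                (fun i _ _ => sq_nonneg _)
  calc A = Real.sqrt A ^ 2 := (Real.sq_sqrt hA0).symm
    _ ≤ tailNorm k z ^ 2 := pow_le_pow_left₀ (Real.sqrt_nonneg _) hlb 2

set_option maxHeartbeats 2000000 in
/-- per-coordinate deviation bound for the count-mean sketch:
if `C ≥ max(8Pk, 8k/(Pα))` then each coordinate estimate deviates (squared) by more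
than `α‖z_tail(k)‖²/k` with probability at most `1/4`. -/
theorem count_mean_sketch_coordinate_deviation
    {d P k : ℕ} (hd : 1 ≤ d) (hP : 1 ≤ P) (hk : 1 ≤ k) (hkd : k ≤ d)
    {α : ℝ} (hα0 : 0 < α) (hα1 : α ≤ 1)
    {C : ℕ} (hC : max (8 * P * k : ℝ) (8 * k / (P * α)) ≤ (C : ℝ))
    (z : Fin d → ℝ) (q : Fin d) :
    unifMeasure (SketchSpace d P C)
        {ω | α * tailNorm k z ^ 2 / k < (SkT ω (Sk ω z) q - z q) ^ 2} ≤ 1 / 4 := by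
  classical
  have hPR : (1:ℝ) ≤ P := by exact_mod_cast hP
  have hkR : (1:ℝ) ≤ k := by exact_mod_cast hk
  have hC1 : (8 * P * k : ℝ) ≤ C := le_trans (le_max_left _ _) hC
  have hC2 : (8 * k / (P * α) : ℝ) ≤ C := le_trans (le_max_right _ _) hC
  have hCR : (0:ℝ) < C := lt_of_lt_of_le (by nlinarith) hC1
  have hCpos : 0 < C := by exact_mod_cast hCR
  have hPR0 : (0:ℝ) < P := by linarith
  obtain ⟨I, hIcard, hImax⟩ := CMS.exists_topk hkd z
  have htail : ∑ i ∈ Finset.univ \ I, z i ^ 2 ≤ tailNorm k z ^ 2 :=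
    CMS.tail_sq_le z I hIcard hImax
  have hτ0 : 0 ≤ tailNorm k z := CMS.tailNorm_nonneg z
  set τ := tailNorm k z with hτ
  set t : ℝ := α * τ ^ 2 / k with ht
  clear_value τ t
  set T : Finset (Fin d) := (Finset.univ.erase q) \ I with hT
  have hTq : ∀ i ∈ T, i ≠ q := fun i hi => (Finset.mem_erase.mp (Finset.mem_sdiff.mp hi).1).1
  have hTI : ∀ i ∈ T, i ∉ I := fun i hi => (Finset.mem_sdiff.mp hi).2
  set G : (Fin P → Fin d → Fin C) → Prop :=
    fun hh => ∀ p : Fin P, ∀ i ∈ I.erase q, hh p i ≠ hh p q with hG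
  have hsqP : (Real.sqrt P)⁻¹ * (Real.sqrt P)⁻¹ = (P:ℝ)⁻¹ := by
    rw [← mul_inv, Real.mul_self_sqrt (le_of_lt (by exact_mod_cast hPR0))]
  -- Step 1: exact formula for the deviation
  have hX : ∀ ω : SketchSpace d P C, SkT ω (Sk ω z) q - z q
      = (P:ℝ)⁻¹ * ∑ p : Fin P, ∑ i ∈ Finset.univ.erase q,
          sgn (ω.2 p q) * sgn (ω.2 p i) * (if ω.1 p i = ω.1 p q then z i else 0) := by
    rintro ⟨h, s⟩
    have e1 : ∀ p : Fin P,
        sgn (s p q) * Sk (h, s) z (p, h p q)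
        = (Real.sqrt P)⁻¹ * ∑ i : Fin d,
            sgn (s p q) * sgn (s p i) * (if h p i = h p q then z i else 0) := by
      intro p
      simp only [Sk, Finset.mul_sum]
      apply Finset.sum_congr rfl
      intro i _
      by_cases hc : h p i = h p q
      · simp only [hc, eq_self_iff_true, if_true]; ring
      · simp only [if_neg hc]; ring
    have e2 : SkT (h, s) (Sk (h, s) z) q
        = (P:ℝ)⁻¹ * ∑ p : Fin P, ∑ i : Fin d,
            sgn (s p q) * sgn (s p i) * (if h p i = h p q then z i else 0) := by
      simp only [SkT]
      simp only [e1]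
      rw [← Finset.mul_sum, ← mul_assoc, hsqP]
    rw [e2]
    have e3 : ∀ p : Fin P, (∑ i : Fin d,
        sgn (s p q) * sgn (s p i) * (if h p i = h p q then z i else 0))
        = z q + ∑ i ∈ Finset.univ.erase q,
            sgn (s p q) * sgn (s p i) * (if h p i = h p q then z i else 0) := by
      intro p
      rw [← Finset.add_sum_erase _ _ (Finset.mem_univ q)]
      congr 1
      rw [if_pos rfl, CMS.sgn_sq, one_mul]
    simp only [e3]
    rw [Finset.sum_add_distrib, Finset.sum_const, Finset.card_univ, Fintype.card_fin,
      nsmul_eq_mul, mul_add, ← mul_assoc, inv_mul_cancel₀ (ne_of_gt hPR0), one_mul]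
    rw [add_sub_cancel_left]
  -- Step 2: on good hash functions the heavy coordinates disappear
  have hXG : ∀ hh : Fin P → Fin d → Fin C, ∀ s : Fin P → Fin d → Bool, G hh →
      SkT (hh, s) (Sk (hh, s) z) q - z q
      = (P:ℝ)⁻¹ * ∑ p : Fin P, ∑ i ∈ T,
          sgn (s p q) * sgn (s p i) * (if hh p i = hh p q then z i else 0) := by
    intro hh s hGh
    rw [hX (hh, s)]
    dsimp only
    congr 1
    apply Finset.sum_congr rfl
    intro p _
    symm
    apply Finset.sum_subset
    · exact Finset.sdiff_subset
    · intro i hi hiT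
      have hiI : i ∈ I := by
        by_contra hiI
        exact hiT (Finset.mem_sdiff.mpr ⟨hi, hiI⟩)
      have hne : hh p i ≠ hh p q :=
        hGh p i (Finset.mem_erase.mpr ⟨(Finset.mem_erase.mp hi).1, hiI⟩)
      rw [if_neg hne, mul_zero]
  set NHn := Fintype.card (Fin P → Fin d → Fin C) with hNH
  set NSn := Fintype.card (Fin P → Fin d → Bool) with hNS
  clear_value NHn NSn
  set V : (Fin P → Fin d → Fin C) → ℝ := fun hh => ∑ p : Fin P, ∑ i ∈ T,
      (if hh p i = hh p q then z i ^ 2 else 0) with hV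
  have hV0 : ∀ hh, 0 ≤ V hh := by
    intro hh
    apply Finset.sum_nonneg; intro p _
    apply Finset.sum_nonneg; intro i _
    positivity
  -- Step 3: conditional second moment
  have hVar : ∀ hh, G hh → (∑ s : Fin P → Fin d → Bool,
      (SkT (hh, s) (Sk (hh, s) z) q - z q) ^ 2) = (NSn:ℝ) * ((P:ℝ)^2)⁻¹ * V hh := by
    intro hh hGh
    set A : Fin P × Fin d → ℝ := fun u => if hh u.1 u.2 = hh u.1 q then z u.2 else 0 with hA
    have e0 : ∀ s : Fin P → Fin d → Bool, (SkT (hh, s) (Sk (hh, s) z) q - z q) ^ 2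
        = ((P:ℝ)^2)⁻¹ * (∑ u ∈ Finset.univ ×ˢ T,
            (sgn (s u.1 q) * sgn (s u.1 u.2)) * A u) ^ 2 := by
      intro s
      have es : (∑ p : Fin P, ∑ i ∈ T,
          sgn (s p q) * sgn (s p i) * (if hh p i = hh p q then z i else 0))
          = ∑ u ∈ Finset.univ ×ˢ T, (sgn (s u.1 q) * sgn (s u.1 u.2)) * A u := by
        rw [Finset.sum_product]
      rw [hXG hh s hGh, es, mul_pow, inv_pow]
    simp only [e0]
    rw [← Finset.mul_sum]
    rw [mul_comm ((NSn:ℝ)) (((P:ℝ)^2)⁻¹), mul_assoc]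
    congr 1
    -- main orthogonality computation
    have expand : ∀ s : Fin P → Fin d → Bool,
        (∑ u ∈ Finset.univ ×ˢ T, (sgn (s u.1 q) * sgn (s u.1 u.2)) * A u) ^ 2
        = ∑ u ∈ Finset.univ ×ˢ T, ∑ v ∈ Finset.univ ×ˢ T,
            ((sgn (s u.1 q) * sgn (s u.1 u.2)) * (sgn (s v.1 q) * sgn (s v.1 v.2)))
              * (A u * A v) := by
      intro s
      rw [pow_two, Finset.sum_mul_sum]
      apply Finset.sum_congr rfl; intro u _
      apply Finset.sum_congr rfl; intro v _
      ring
    simp only [expand]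
    rw [Finset.sum_comm]
    have swap2 : ∀ u ∈ Finset.univ ×ˢ T, (∑ s : Fin P → Fin d → Bool,
        ∑ v ∈ Finset.univ ×ˢ T,
          ((sgn (s u.1 q) * sgn (s u.1 u.2)) * (sgn (s v.1 q) * sgn (s v.1 v.2)))
            * (A u * A v))
        = ∑ v ∈ Finset.univ ×ˢ T, ∑ s : Fin P → Fin d → Bool,
          ((sgn (s u.1 q) * sgn (s u.1 u.2)) * (sgn (s v.1 q) * sgn (s v.1 v.2)))
            * (A u * A v) := fun u _ => Finset.sum_comm
    rw [Finset.sum_congr rfl swap2]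
    have inner : ∀ u ∈ Finset.univ ×ˢ T, ∀ v ∈ Finset.univ ×ˢ T,
        (∑ s : Fin P → Fin d → Bool,
          ((sgn (s u.1 q) * sgn (s u.1 u.2)) * (sgn (s v.1 q) * sgn (s v.1 v.2)))
            * (A u * A v))
        = (if u = v then (NSn:ℝ) else 0) * (A u * A v) := by
      intro u hu v hv
      rw [← Finset.sum_mul]
      have hiq : u.2 ≠ q := hTq u.2 (Finset.mem_product.mp hu).2
      have hiq' : v.2 ≠ q := hTq v.2 (Finset.mem_product.mp hv).2
      have horth := CMS.sign_orth u.1 v.1 q u.2 v.2 hiq hiq'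
      rw [horth, ← hNS]
    rw [Finset.sum_congr rfl (fun u hu => Finset.sum_congr rfl (fun v hv => inner u hu v hv))]
    have diag : ∀ u ∈ Finset.univ ×ˢ T,
        (∑ v ∈ Finset.univ ×ˢ T, (if u = v then (NSn:ℝ) else 0) * (A u * A v))
        = (NSn:ℝ) * (A u * A u) := by
      intro u hu
      have e : ∀ v ∈ Finset.univ ×ˢ T,
          (if u = v then (NSn:ℝ) else 0) * (A u * A v)
          = if u = v then (NSn:ℝ) * (A u * A v) else 0 := by
        intro v _
        by_cases hc : u = v
        · rw [if_pos hc, if_pos hc]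
        · rw [if_neg hc, if_neg hc, zero_mul]
      rw [Finset.sum_congr rfl e, Finset.sum_ite_eq, if_pos hu]
    rw [Finset.sum_congr rfl diag, ← Finset.mul_sum]
    congr 1
    rw [hV, Finset.sum_product]
    apply Finset.sum_congr rfl; intro p _
    apply Finset.sum_congr rfl; intro i _
    rw [hA]
    by_cases hc : hh p i = hh p q
    · rw [if_pos hc]; dsimp only; rw [if_pos hc]; ring
    · rw [if_neg hc]; dsimp only; rw [if_neg hc]; ring
  -- Step 4: averaged variance
  have hVsum : ∑ hh : Fin P → Fin d → Fin C, V hh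
      = (P:ℝ) * ((NHn:ℝ) / C * ∑ i ∈ T, z i ^ 2) := by
    rw [hV]
    rw [Finset.sum_comm]
    have e : ∀ p : Fin P, (∑ hh : Fin P → Fin d → Fin C, ∑ i ∈ T,
        (if hh p i = hh p q then z i ^ 2 else 0))
        = (NHn:ℝ) / C * ∑ i ∈ T, z i ^ 2 := by
      intro p
      rw [Finset.sum_comm, Finset.mul_sum]
      apply Finset.sum_congr rfl
      intro i hi
      rw [hNH]
      exact CMS.sum_collision_H hCpos p i q (hTq i hi) (z i ^ 2)
    rw [Finset.sum_congr rfl (fun p _ => e p), Finset.sum_const, Finset.card_univ,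
      Fintype.card_fin, nsmul_eq_mul]
  -- Step 5: bad-hash probability
  have hGc : ∑ hh : Fin P → Fin d → Fin C, (if G hh then (0:ℝ) else 1)
      ≤ (P:ℝ) * k * ((NHn:ℝ) / C) := by
    have pw : ∀ hh, (if G hh then (0:ℝ) else 1)
        ≤ ∑ p : Fin P, ∑ i ∈ I.erase q, (if hh p i = hh p q then (1:ℝ) else 0) := by
      intro hh
      by_cases hGh : G hh
      · rw [if_pos hGh]
        apply Finset.sum_nonneg; intro p _
        apply Finset.sum_nonneg; intro i _
        positivity
      · rw [if_neg hGh]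
        simp only [hG] at hGh
        push_neg at hGh
        obtain ⟨p, i, hiI, hcol⟩ := hGh
        have h1 : (1:ℝ) ≤ ∑ i' ∈ I.erase q, (if hh p i' = hh p q then (1:ℝ) else 0) := by
          have h2 := Finset.single_le_sum
            (f := fun i' => if hh p i' = hh p q then (1:ℝ) else 0)
            (fun i' _ => by positivity) hiI
          simp only [hcol, eq_self_iff_true, if_true] at h2
          exact h2
        refine le_trans h1 (Finset.single_le_sum
          (f := fun p' => ∑ i' ∈ I.erase q, (if hh p' i' = hh p' q then (1:ℝ) else 0))
          (fun p' _ => Finset.sum_nonneg fun i' _ => by positivity) (Finset.mem_univ p))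
    calc ∑ hh : Fin P → Fin d → Fin C, (if G hh then (0:ℝ) else 1)
        ≤ ∑ hh : Fin P → Fin d → Fin C, ∑ p : Fin P, ∑ i ∈ I.erase q,
            (if hh p i = hh p q then (1:ℝ) else 0) :=
          Finset.sum_le_sum fun hh _ => pw hh
      _ = ∑ p : Fin P, ∑ hh : Fin P → Fin d → Fin C, ∑ i ∈ I.erase q,
            (if hh p i = hh p q then (1:ℝ) else 0) := Finset.sum_comm
      _ = ∑ p : Fin P, ∑ i ∈ I.erase q, ((NHn:ℝ) / C * 1) := by
          apply Finset.sum_congr rfl; intro p _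
          rw [Finset.sum_comm]
          apply Finset.sum_congr rfl; intro i hi
          rw [hNH]
          exact CMS.sum_collision_H hCpos p i q (Finset.mem_erase.mp hi).1 1
      _ = (P:ℝ) * (I.erase q).card * ((NHn:ℝ) / C) := by
          simp only [Finset.sum_const, Finset.card_univ, Fintype.card_fin, nsmul_eq_mul,
            mul_one]
          ring
      _ ≤ (P:ℝ) * k * ((NHn:ℝ) / C) := by
          have hcard : ((I.erase q).card : ℝ) ≤ k := by
            have h3 : (I.erase q).card ≤ I.card := Finset.card_erase_le
            have h4 : (I.erase q).card ≤ k := hIcard ▸ h3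
            exact_mod_cast h4
          have hdiv : (0:ℝ) ≤ (NHn:ℝ) / C := by positivity
          have h5 : (P:ℝ) * ((I.erase q).card : ℝ) ≤ (P:ℝ) * k :=
            mul_le_mul_of_nonneg_left hcard hPR0.le
          exact mul_le_mul_of_nonneg_right h5 hdiv
  -- Step 6: the counting bound
  set badP : SketchSpace d P C → Prop :=
    fun ω => t < (SkT ω (Sk ω z) q - z q) ^ 2 with hbadP
  set B := Finset.univ.filter badP with hB
  clear_value B
  have hcards : (Fintype.card (SketchSpace d P C) : ℝ) = (NHn:ℝ) * NSn := by
    rw [Fintype.card_prod, hNH, hNS]; push_cast; ring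
  have hST : ∑ i ∈ T, z i ^ 2 ≤ τ ^ 2 := by
    refine le_trans ?_ htail
    apply Finset.sum_le_sum_of_subset_of_nonneg
    · intro i hi
      exact Finset.mem_sdiff.mpr ⟨Finset.mem_univ i, hTI i hi⟩
    · intro i _ _; positivity
  have hmain : (B.card : ℝ) ≤ (Fintype.card (SketchSpace d P C) : ℝ) / 4 := by
    have hb1 : (B.card : ℝ) = ∑ hh : Fin P → Fin d → Fin C, ∑ s : Fin P → Fin d → Bool,
        (if badP (hh, s) then (1:ℝ) else 0) := by
      rw [hB, ← Finset.sum_boole, Fintype.sum_prod_type]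
    -- the two error terms
    have term2 : (NSn:ℝ) * ((P:ℝ) * k * ((NHn:ℝ) / C)) ≤ (NHn:ℝ) * NSn / 8 := by
      have h8 : (P:ℝ) * k / C ≤ 1 / 8 := by
        rw [div_le_div_iff₀ hCR (by norm_num)]
        nlinarith
      have hNSnn : (0:ℝ) ≤ NSn := Nat.cast_nonneg _
      have hNHnn : (0:ℝ) ≤ NHn := Nat.cast_nonneg _
      have he : (NSn:ℝ) * ((P:ℝ) * k * ((NHn:ℝ) / C))
          = ((P:ℝ) * k / C) * ((NHn:ℝ) * NSn) := by ring
      rw [he]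
      calc ((P:ℝ) * k / C) * ((NHn:ℝ) * NSn) ≤ (1/8) * ((NHn:ℝ) * NSn) := by
            apply mul_le_mul_of_nonneg_right h8; positivity
        _ = (NHn:ℝ) * NSn / 8 := by ring
    rcases eq_or_lt_of_le hτ0 with hτz | hτpos
    · -- degenerate case : zero tail
      have hzT : ∀ i ∈ T, z i = 0 := by
        intro i hi
        have h1 : ∑ i ∈ Finset.univ \ I, z i ^ 2 ≤ 0 := by
          rw [← hτz] at htail; simpa using htail
        have h2 : ∑ i ∈ Finset.univ \ I, z i ^ 2 = 0 :=
          le_antisymm h1 (Finset.sum_nonneg fun i _ => sq_nonneg _)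
        have h3 := (Finset.sum_eq_zero_iff_of_nonneg (fun i _ => sq_nonneg (z i))).mp h2
        have h4 := h3 i (Finset.mem_sdiff.mpr ⟨Finset.mem_univ i, hTI i hi⟩)
        exact pow_eq_zero_iff (n := 2) (by norm_num) |>.mp h4
      have pw : ∀ hh s, (if badP (hh, s) then (1:ℝ) else 0) ≤ (if G hh then (0:ℝ) else 1) := by
        intro hh s
        by_cases hGh : G hh
        · rw [if_pos hGh]
          have hX0 : SkT (hh, s) (Sk (hh, s) z) q - z q = 0 := by
            rw [hXG hh s hGh]
            have e : ∀ p ∈ (Finset.univ : Finset (Fin P)), (∑ i ∈ T,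
                sgn (s p q) * sgn (s p i) * (if hh p i = hh p q then z i else 0)) = 0 := by
              intro p _
              apply Finset.sum_eq_zero
              intro i hi
              rw [hzT i hi]
              simp
            rw [Finset.sum_congr rfl e]
            simp
          have hnb : ¬ badP (hh, s) := by
            simp only [hbadP]
            rw [hX0, ht, ← hτz]
            norm_num
          rw [if_neg hnb]
        · rw [if_neg hGh]
          split <;> norm_num
      rw [hb1]
      calc (∑ hh : Fin P → Fin d → Fin C, ∑ s : Fin P → Fin d → Bool,
            (if badP (hh, s) then (1:ℝ) else 0))
          ≤ ∑ hh : Fin P → Fin d → Fin C, ∑ s : Fin P → Fin d → Bool,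
            (if G hh then (0:ℝ) else 1) :=
            Finset.sum_le_sum fun hh _ => Finset.sum_le_sum fun s _ => pw hh s
        _ = (NSn:ℝ) * ∑ hh : Fin P → Fin d → Fin C, (if G hh then (0:ℝ) else 1) := by
            simp only [Finset.sum_const, Finset.card_univ, nsmul_eq_mul, Finset.mul_sum, hNS]
        _ ≤ (NSn:ℝ) * ((P:ℝ) * k * ((NHn:ℝ) / C)) := by
            apply mul_le_mul_of_nonneg_left hGc (by positivity : (0:ℝ) ≤ (NSn:ℝ))
        _ ≤ (NHn:ℝ) * NSn / 8 := term2
        _ ≤ (Fintype.card (SketchSpace d P C) : ℝ) / 4 := by rw [hcards]; linarith [(by positivity : (0:ℝ) ≤ (NHn:ℝ) * (NSn:ℝ))]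
    · -- main case : positive tail
      have hk0 : (0:ℝ) < k := by linarith
      have ht0 : 0 < t := by
        rw [ht]
        exact div_pos (mul_pos hα0 (pow_pos hτpos 2)) hk0
      have pw : ∀ hh s, (if badP (hh, s) then (1:ℝ) else 0)
          ≤ (if G hh then ((SkT (hh, s) (Sk (hh, s) z) q - z q) ^ 2) / t else 1) := by
        intro hh s
        by_cases hGh : G hh
        · rw [if_pos hGh]
          by_cases hb : badP (hh, s)
          · rw [if_pos hb]
            simp only [hbadP] at hb
            rw [le_div_iff₀ ht0]
            linarith
          · rw [if_neg hb]
            exact div_nonneg (sq_nonneg _) (le_of_lt ht0)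
        · rw [if_neg hGh]
          split <;> norm_num
      have hinner : ∀ hh, (∑ s : Fin P → Fin d → Bool,
          (if G hh then ((SkT (hh, s) (Sk (hh, s) z) q - z q) ^ 2) / t else 1))
          ≤ (NSn:ℝ) * ((P:ℝ)^2)⁻¹ * V hh / t + (if G hh then (0:ℝ) else 1) * NSn := by
        intro hh
        by_cases hGh : G hh
        · rw [if_pos hGh]
          simp only [if_pos hGh]
          rw [← Finset.sum_div, hVar hh hGh]
          rw [zero_mul, add_zero]
        · rw [if_neg hGh]
          simp only [if_neg hGh]
          rw [Finset.sum_const, Finset.card_univ, nsmul_eq_mul, mul_one, one_mul, hNS]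
          have hnn : 0 ≤ (NSn:ℝ) * ((P:ℝ)^2)⁻¹ * V hh / t :=
            div_nonneg (mul_nonneg (mul_nonneg (by positivity) (by positivity)) (hV0 hh))
              ht0.le
          rw [hNS] at hnn
          linarith
      rw [hb1]
      have step : (∑ hh : Fin P → Fin d → Fin C, ∑ s : Fin P → Fin d → Bool,
          (if badP (hh, s) then (1:ℝ) else 0))
          ≤ ∑ hh : Fin P → Fin d → Fin C,
            ((NSn:ℝ) * ((P:ℝ)^2)⁻¹ * V hh / t + (if G hh then (0:ℝ) else 1) * NSn) := by
        apply Finset.sum_le_sum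
        intro hh _
        exact le_trans (Finset.sum_le_sum fun s _ => pw hh s) (hinner hh)
      refine le_trans step ?_
      rw [Finset.sum_add_distrib]
      have part1 : (∑ hh : Fin P → Fin d → Fin C, (NSn:ℝ) * ((P:ℝ)^2)⁻¹ * V hh / t)
          ≤ (NHn:ℝ) * NSn / 8 := by
        have e : (∑ hh : Fin P → Fin d → Fin C, (NSn:ℝ) * ((P:ℝ)^2)⁻¹ * V hh / t)
            = (NSn:ℝ) * ((P:ℝ)^2)⁻¹ / t * ∑ hh : Fin P → Fin d → Fin C, V hh := by
          rw [Finset.mul_sum]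
          apply Finset.sum_congr rfl; intro hh _
          ring
        rw [e, hVsum]
        have hPCα : (8:ℝ) * k ≤ C * (P * α) := by
          rw [div_le_iff₀ (mul_pos hPR0 hα0)] at hC2
          linarith
        have hτ2 : (0:ℝ) < τ ^ 2 := pow_pos hτpos 2
        have hquot : ((P:ℝ)^2)⁻¹ / t * ((P:ℝ) * ((NHn:ℝ) / C * ∑ i ∈ T, z i ^ 2))
            ≤ (NHn:ℝ) / 8 := by
          rw [ht]
          have hNHnn : (0:ℝ) ≤ NHn := Nat.cast_nonneg _
          have hτne : τ ≠ 0 := ne_of_gt hτpos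
          have hαne : α ≠ 0 := ne_of_gt hα0
          have hPne : (P:ℝ) ≠ 0 := ne_of_gt hPR0
          have hCne : (C:ℝ) ≠ 0 := ne_of_gt hCR
          have hkne : (k:ℝ) ≠ 0 := ne_of_gt hk0
          have e2 : ((P:ℝ)^2)⁻¹ / (α * τ ^ 2 / k) * ((P:ℝ) * ((NHn:ℝ) / C * ∑ i ∈ T, z i ^ 2))
              = (NHn:ℝ) * (k * (∑ i ∈ T, z i ^ 2)) / (P * α * τ ^ 2 * C) := by
            field_simp
          rw [e2]
          rw [div_le_div_iff₀ (mul_pos (mul_pos (mul_pos hPR0 hα0) hτ2) hCR) (by norm_num)]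
          have hSnn : (0:ℝ) ≤ ∑ i ∈ T, z i ^ 2 :=
            Finset.sum_nonneg fun i _ => sq_nonneg _
          -- NHn * (k * Σ) * 8 ≤ NHn * (P*α*τ²*C)
          have key : (k:ℝ) * (∑ i ∈ T, z i ^ 2) * 8 ≤ P * α * τ ^ 2 * C := by
            calc (k:ℝ) * (∑ i ∈ T, z i ^ 2) * 8
                ≤ (k:ℝ) * τ ^ 2 * 8 :=
                  mul_le_mul_of_nonneg_right
                    (mul_le_mul_of_nonneg_left hST hk0.le) (by norm_num)
              _ = (8 * (k:ℝ)) * τ ^ 2 := by ring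
              _ ≤ ((C:ℝ) * ((P:ℝ) * α)) * τ ^ 2 := mul_le_mul_of_nonneg_right hPCα hτ2.le
              _ = (P:ℝ) * α * τ ^ 2 * C := by ring
          calc (NHn:ℝ) * (k * (∑ i ∈ T, z i ^ 2)) * 8
              = (NHn:ℝ) * (k * (∑ i ∈ T, z i ^ 2) * 8) := by ring
            _ ≤ (NHn:ℝ) * (P * α * τ ^ 2 * C) := mul_le_mul_of_nonneg_left key hNHnn
        calc (NSn:ℝ) * ((P:ℝ)^2)⁻¹ / t * ((P:ℝ) * ((NHn:ℝ) / C * ∑ i ∈ T, z i ^ 2))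
            = (NSn:ℝ) * (((P:ℝ)^2)⁻¹ / t * ((P:ℝ) * ((NHn:ℝ) / C * ∑ i ∈ T, z i ^ 2))) := by
              ring
          _ ≤ (NSn:ℝ) * ((NHn:ℝ) / 8) := by
              apply mul_le_mul_of_nonneg_left hquot (by positivity : (0:ℝ) ≤ (NSn:ℝ))
          _ = (NHn:ℝ) * NSn / 8 := by ring
      have part2 : (∑ hh : Fin P → Fin d → Fin C, (if G hh then (0:ℝ) else 1) * (NSn:ℝ))
          ≤ (NHn:ℝ) * NSn / 8 := by
        rw [← Finset.sum_mul]
        calc (∑ hh : Fin P → Fin d → Fin C, (if G hh then (0:ℝ) else 1)) * (NSn:ℝ)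
            ≤ ((P:ℝ) * k * ((NHn:ℝ) / C)) * NSn := by
              apply mul_le_mul_of_nonneg_right hGc (by positivity : (0:ℝ) ≤ (NSn:ℝ))
          _ = (NSn:ℝ) * ((P:ℝ) * k * ((NHn:ℝ) / C)) := by ring
          _ ≤ (NHn:ℝ) * NSn / 8 := term2
      rw [hcards]
      linarith
  -- Step 7: from counting to the uniform measure
  set NW := Fintype.card (SketchSpace d P C) with hNW
  have hNpos : 0 < NW := by
    have hne : Nonempty (SketchSpace d P C) :=
      ⟨⟨fun _ _ => ⟨0, hCpos⟩, fun _ _ => true⟩⟩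
    rw [hNW]
    exact Fintype.card_pos
  clear_value NW
  have hnat : B.card * 4 ≤ NW := by
    have h4 : ((B.card * 4 : ℕ):ℝ) ≤ ((NW : ℕ):ℝ) := by
      push_cast
      linarith
    exact_mod_cast h4
  have hsetB : (Set.toFinite {ω : SketchSpace d P C | badP ω}).toFinset = B := by
    ext ω
    simp [hB, Set.Finite.mem_toFinset]
  unfold unifMeasure
  rw [Measure.smul_apply, smul_eq_mul]
  have hcount : Measure.count {ω : SketchSpace d P C | badP ω} = (B.card : ℝ≥0∞) := by
    rw [Measure.count_apply_finite _ (Set.toFinite _), hsetB]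
  rw [show {ω : SketchSpace d P C | t < (SkT ω (Sk ω z) q - z q) ^ 2}
      = {ω : SketchSpace d P C | badP ω} from rfl]
  rw [hcount, ← hNW]
  have hNne : (NW : ℝ≥0∞) ≠ 0 := by
    exact_mod_cast hNpos.ne'
  rw [ENNReal.inv_mul_le_iff hNne (by exact_mod_cast ENNReal.natCast_ne_top _)]
  rw [mul_one_div]
  rw [ENNReal.le_div_iff_mul_le (Or.inl (by norm_num)) (Or.inl (by norm_num))]
  exact_mod_cast hnat
end
end

section
/- Let G > 0, 0 < τ ≤ 1/2, and n ≥ 1. Let D₁ be the probability measure on ℝ with D₁({G}) = (1+τ)/2 and D₁({−G}) = (1−τ)/2, and let D₂ be the probability measure with D₂({G}) = (1−τ)/2 and D₂({−G}) = (1+τ)/2. Then the total variation distance between the n-fold product measures satisfies TV(D₁^{⊗n}, D₂^{⊗n})² ≤ 1 − exp(−3nτ²). -/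
open MeasureTheory ProbabilityTheory
open scoped ENNReal NNReal

noncomputable section

/-- Total variation distance `TV(P,Q) = sup_A |P(A) − Q(A)|` over measurable sets. -/
def TVdist {γ : Type*} [MeasurableSpace γ] (P Q : Measure γ) : ℝ :=
  ⨆ A : {A : Set γ // MeasurableSet A}, |(P A.1).toReal - (Q A.1).toReal|

open Finset
open scoped Classical

/-- partial-sum bound by half the ℓ¹ distance -/
lemma tv_sum_bound {ι : Type*} [Fintype ι] (p q : ι → ℝ)
    (hp1 : ∑ i, p i = 1) (hq1 : ∑ i, q i = 1) (B : Finset ι) :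
    |∑ i ∈ B, (p i - q i)| ≤ (1/2) * ∑ i, |p i - q i| := by
  have key : ∀ (u v : ι → ℝ), (∑ i, u i = 1) → (∑ i, v i = 1) →
      ∑ i ∈ B, (u i - v i) ≤ (1/2) * ∑ i, |u i - v i| := by
    intro u v hu hv
    have h1 : ∑ i ∈ B, (u i - v i) ≤ ∑ i ∈ B, max (u i - v i) 0 :=
      Finset.sum_le_sum fun i _ => le_max_left _ _
    have h2 : ∑ i ∈ B, max (u i - v i) 0 ≤ ∑ i, max (u i - v i) 0 :=
      Finset.sum_le_sum_of_subset_of_nonneg (Finset.subset_univ B)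
        (fun i _ _ => le_max_right _ _)
    have h3 : ∑ i, max (u i - v i) 0 = (1/2) * ∑ i, |u i - v i| := by
      have : ∀ i, max (u i - v i) 0 = (|u i - v i| + (u i - v i)) / 2 := by
        intro i; rcases le_total (u i) (v i) with h | h
        · rw [max_eq_right (by linarith), abs_of_nonpos (by linarith)]; ring
        · rw [max_eq_left (by linarith), abs_of_nonneg (by linarith)]; ring
      simp_rw [this]
      rw [← Finset.sum_div, Finset.sum_add_distrib, Finset.sum_sub_distrib, hu, hv]
      ring
    linarith [h1, h2, h3.le, h3.ge]
  rw [abs_le]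
  constructor
  · have := key q p hq1 hp1
    have e1 : ∑ i ∈ B, (q i - p i) = -∑ i ∈ B, (p i - q i) := by
      rw [← Finset.sum_neg_distrib]; congr 1; ext i; ring
    have e2 : ∀ i, |q i - p i| = |p i - q i| := fun i => abs_sub_comm _ _
    simp_rw [e1, e2] at this; linarith
  · exact key p q hp1 hq1

/-- Cauchy–Schwarz / Hellinger bound -/
lemma tv_sq_le_one_sub_hellinger_sq {ι : Type*} [Fintype ι] (p q : ι → ℝ)
    (hp : ∀ i, 0 ≤ p i) (hq : ∀ i, 0 ≤ q i)
    (hp1 : ∑ i, p i = 1) (hq1 : ∑ i, q i = 1) :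
    ((1/2) * ∑ i, |p i - q i|) ^ 2 ≤ 1 - (∑ i, Real.sqrt (p i * q i)) ^ 2 := by
  set t := (1/2) * ∑ i, |p i - q i| with ht
  have hmin : ∑ i, min (p i) (q i) = 1 - t := by
    have : ∀ i, min (p i) (q i) = (p i + q i - |p i - q i|) / 2 := by
      intro i; rcases le_total (p i) (q i) with h | h
      · rw [min_eq_left h, abs_of_nonpos (by linarith)]; ring
      · rw [min_eq_right h, abs_of_nonneg (by linarith)]; ring
    simp_rw [this]
    rw [← Finset.sum_div, Finset.sum_sub_distrib, Finset.sum_add_distrib, hp1, hq1, ht]; ring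
  have hmax : ∑ i, max (p i) (q i) = 1 + t := by
    have : ∀ i, max (p i) (q i) = (p i + q i + |p i - q i|) / 2 := by
      intro i; rcases le_total (p i) (q i) with h | h
      · rw [max_eq_right h, abs_of_nonpos (by linarith)]; ring
      · rw [max_eq_left h, abs_of_nonneg (by linarith)]; ring
    simp_rw [this]
    rw [← Finset.sum_div, Finset.sum_add_distrib, Finset.sum_add_distrib, hp1, hq1, ht]; ring
  have hsq : ∀ i, Real.sqrt (p i * q i) = Real.sqrt (min (p i) (q i)) * Real.sqrt (max (p i) (q i)) := by
    intro i
    rw [← Real.sqrt_mul (le_min (hp i) (hq i)), min_mul_max]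
  have cs := Finset.sum_mul_sq_le_sq_mul_sq Finset.univ
    (fun i => Real.sqrt (min (p i) (q i))) (fun i => Real.sqrt (max (p i) (q i)))
  simp_rw [Real.sq_sqrt (le_min (hp _) (hq _)), Real.sq_sqrt (le_max_of_le_left (hp _))] at cs
  rw [hmin, hmax] at cs
  have : (∑ i, Real.sqrt (p i * q i)) ^ 2 ≤ (1 - t) * (1 + t) := by
    simp_rw [hsq]; exact cs
  nlinarith [this]



lemma sqrt_prod' {ι : Type*} (s : Finset ι) (f : ι → ℝ) (hf : ∀ i, 0 ≤ f i) :
    Real.sqrt (∏ i ∈ s, f i) = ∏ i ∈ s, Real.sqrt (f i) := by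
  classical
  induction s using Finset.induction with
  | empty => simp
  | insert _ _ hx ih =>
      rw [Finset.prod_insert hx, Finset.prod_insert hx, Real.sqrt_mul (hf _), ih]

lemma pi_two_atom_apply (n : ℕ) (G : ℝ) (w : Bool → ℝ) (hw : ∀ b, 0 ≤ w b)
    (hw1 : w true + w false = 1) (A : Set (Fin n → ℝ)) (hA : MeasurableSet A) :
    ((Measure.pi fun _ : Fin n => (ENNReal.ofReal (w true) • Measure.dirac G
        + ENNReal.ofReal (w false) • Measure.dirac (-G))) A).toReal
      = ∑ s ∈ Finset.univ.filter
          (fun s : Fin n → Bool => (fun i => if s i then G else -G) ∈ A),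
          ∏ i, w (s i) := by
  classical
  set g : Bool → ℝ := fun b => if b then G else -G with hg
  set μ : Measure Bool := ENNReal.ofReal (w true) • Measure.dirac true
      + ENNReal.ofReal (w false) • Measure.dirac false with hμ
  have hgm : Measurable g := measurable_of_countable g
  have hμb : ∀ b, μ {b} = ENNReal.ofReal (w b) := by
    intro b
    cases b <;>
      simp [hμ, Measure.dirac_apply' _ (measurableSet_singleton _), Set.indicator]
  haveI : IsProbabilityMeasure μ := by
    constructor
    simp only [hμ, Measure.coe_add, Pi.add_apply, Measure.smul_apply, smul_eq_mul,
      measure_univ, mul_one]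
    rw [← ENNReal.ofReal_add (hw true) (hw false), hw1, ENNReal.ofReal_one]
  have hmap : Measure.map g μ = ENNReal.ofReal (w true) • Measure.dirac G
      + ENNReal.ofReal (w false) • Measure.dirac (-G) := by
    rw [hμ, Measure.map_add _ _ hgm, Measure.map_smul, Measure.map_smul,
      Measure.map_dirac' hgm, Measure.map_dirac' hgm]
    simp [hg]
  haveI : IsProbabilityMeasure (ENNReal.ofReal (w true) • Measure.dirac G
      + ENNReal.ofReal (w false) • Measure.dirac (-G)) := by
    rw [← hmap]; exact Measure.isProbabilityMeasure_map hgm.aemeasurable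
  have hpres : MeasurePreserving (fun (x : Fin n → Bool) i => g (x i))
      (Measure.pi fun _ : Fin n => μ)
      (Measure.pi fun _ : Fin n => (ENNReal.ofReal (w true) • Measure.dirac G
        + ENNReal.ofReal (w false) • Measure.dirac (-G))) :=
    measurePreserving_pi _ _ (fun _ => ⟨hgm, hmap⟩)
  rw [← hpres.measure_preimage hA.nullMeasurableSet]
  set B := Finset.univ.filter
    (fun s : Fin n → Bool => (fun i => if s i then G else -G) ∈ A) with hB
  have hpre : (fun (x : Fin n → Bool) i => g (x i)) ⁻¹' A = ⋃ s ∈ B, {s} := by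
    ext x
    simp [hB, hg, Set.mem_preimage]
  rw [hpre, measure_biUnion_finset ?disj (fun s _ => measurableSet_singleton s)]
  case disj =>
    intro x _ y _ hxy
    simp [Set.disjoint_singleton, hxy]
  rw [ENNReal.toReal_sum (fun s _ => measure_ne_top _ _)]
  refine Finset.sum_congr rfl fun s _ => ?_
  rw [← Set.univ_pi_singleton, Measure.pi_pi, ENNReal.toReal_prod]
  exact Finset.prod_congr rfl fun i _ => by rw [hμb, ENNReal.toReal_ofReal (hw _)]


set_option maxHeartbeats 1000000

/-- total variation bound between `n`-fold products of the two symmetric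
Bernoulli-type measures: `TV(D₁^{⊗n}, D₂^{⊗n})² ≤ 1 − exp(−3nτ²)`. -/
theorem tv_product_symmetric_bernoulli
    (G τ : ℝ) (n : ℕ) (hG : 0 < G) (hτ0 : 0 < τ) (hτ : τ ≤ 1 / 2) (hn : 1 ≤ n)
    (D₁ D₂ : Measure ℝ)
    (hD₁ : D₁ = ENNReal.ofReal ((1 + τ) / 2) • Measure.dirac G
              + ENNReal.ofReal ((1 - τ) / 2) • Measure.dirac (-G))
    (hD₂ : D₂ = ENNReal.ofReal ((1 - τ) / 2) • Measure.dirac G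
              + ENNReal.ofReal ((1 + τ) / 2) • Measure.dirac (-G)) :
    TVdist (Measure.pi fun _ : Fin n => D₁) (Measure.pi fun _ : Fin n => D₂) ^ 2 ≤
      1 - Real.exp (-(3 * n * τ ^ 2)) := by
  classical
  have hτ2 : τ ^ 2 ≤ 1 / 4 := by nlinarith
  have hτ2' : (0 : ℝ) ≤ 1 - τ ^ 2 := by nlinarith
  set wp : Bool → ℝ := fun b => if b then (1 + τ) / 2 else (1 - τ) / 2 with hwp
  set wq : Bool → ℝ := fun b => if b then (1 - τ) / 2 else (1 + τ) / 2 with hwq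
  have hwpn : ∀ b, 0 ≤ wp b := by intro b; cases b <;> simp [hwp] <;> linarith
  have hwqn : ∀ b, 0 ≤ wq b := by intro b; cases b <;> simp [hwq] <;> linarith
  have hwp1 : wp true + wp false = 1 := by simp [hwp]; ring
  have hwq1 : wq true + wq false = 1 := by simp [hwq]; ring
  set p : (Fin n → Bool) → ℝ := fun s => ∏ i, wp (s i) with hp
  set q : (Fin n → Bool) → ℝ := fun s => ∏ i, wq (s i) with hq
  have hpn : ∀ s, 0 ≤ p s := fun s => Finset.prod_nonneg fun i _ => hwpn _
  have hqn : ∀ s, 0 ≤ q s := fun s => Finset.prod_nonneg fun i _ => hwqn _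
  have hp1 : ∑ s, p s = 1 := by
    calc ∑ s : Fin n → Bool, p s = ∏ _i : Fin n, ∑ b, wp b :=
          (Fintype.prod_sum fun (_ : Fin n) (b : Bool) => wp b).symm
      _ = 1 := by
          rw [show ∑ b, wp b = wp true + wp false from Fintype.sum_bool _, hwp1,
            Finset.prod_const_one]
  have hq1 : ∑ s, q s = 1 := by
    calc ∑ s : Fin n → Bool, q s = ∏ _i : Fin n, ∑ b, wq b :=
          (Fintype.prod_sum fun (_ : Fin n) (b : Bool) => wq b).symm
      _ = 1 := by
          rw [show ∑ b, wq b = wq true + wq false from Fintype.sum_bool _, hwq1,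
            Finset.prod_const_one]
  have hρ : ∑ s, Real.sqrt (p s * q s) = Real.sqrt (1 - τ ^ 2) ^ n := by
    have h1 : ∀ s, Real.sqrt (p s * q s) = ∏ i, Real.sqrt (wp (s i) * wq (s i)) := by
      intro s
      rw [show p s * q s = ∏ i, (wp (s i) * wq (s i)) from (Finset.prod_mul_distrib).symm,
        sqrt_prod' _ _ (fun i => mul_nonneg (hwpn _) (hwqn _))]
    simp_rw [h1]
    have hb : ∑ b, Real.sqrt (wp b * wq b) = Real.sqrt (1 - τ ^ 2) := by
      rw [Fintype.sum_bool]
      have e1 : wp true * wq true = (1 - τ ^ 2) * (1 / 2) ^ 2 := by simp [hwp, hwq]; ring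
      have e2 : wp false * wq false = (1 - τ ^ 2) * (1 / 2) ^ 2 := by simp [hwp, hwq]; ring
      rw [e1, e2, Real.sqrt_mul hτ2', Real.sqrt_sq (by norm_num : (0:ℝ) ≤ (1:ℝ)/2)]
      ring
    calc ∑ s : Fin n → Bool, ∏ i, Real.sqrt (wp (s i) * wq (s i))
        = ∏ _i : Fin n, ∑ b, Real.sqrt (wp b * wq b) :=
          (Fintype.prod_sum fun (_ : Fin n) (b : Bool) => Real.sqrt (wp b * wq b)).symm
      _ = Real.sqrt (1 - τ ^ 2) ^ n := by
          rw [hb, Finset.prod_const, Finset.card_univ, Fintype.card_fin]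
  set t : ℝ := (1 / 2) * ∑ s, |p s - q s| with htdef
  have hts : 0 ≤ t := by positivity
  have hbound : ∀ (A : Set (Fin n → ℝ)), MeasurableSet A →
      |((Measure.pi fun _ : Fin n => D₁) A).toReal
        - ((Measure.pi fun _ : Fin n => D₂) A).toReal| ≤ t := by
    intro A hA
    have hD₁' : D₁ = ENNReal.ofReal (wp true) • Measure.dirac G
        + ENNReal.ofReal (wp false) • Measure.dirac (-G) := by rw [hD₁]; simp [hwp]
    have hD₂' : D₂ = ENNReal.ofReal (wq true) • Measure.dirac G
        + ENNReal.ofReal (wq false) • Measure.dirac (-G) := by rw [hD₂]; simp [hwq]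
    have e1 := pi_two_atom_apply n G wp hwpn hwp1 A hA
    have e2 := pi_two_atom_apply n G wq hwqn hwq1 A hA
    rw [hD₁', hD₂', e1, e2, ← Finset.sum_sub_distrib]
    exact tv_sum_bound p q hp1 hq1 _
  have htv : TVdist (Measure.pi fun _ : Fin n => D₁) (Measure.pi fun _ : Fin n => D₂) ≤ t := by
    unfold TVdist
    exact Real.iSup_le (fun A => hbound A.1 A.2) hts
  have htv0 : 0 ≤ TVdist (Measure.pi fun _ : Fin n => D₁) (Measure.pi fun _ : Fin n => D₂) := by
    unfold TVdist
    exact Real.iSup_nonneg fun A => abs_nonneg _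
  have hcs := tv_sq_le_one_sub_hellinger_sq p q hpn hqn hp1 hq1
  rw [← htdef] at hcs
  have hρ2 : (∑ s, Real.sqrt (p s * q s)) ^ 2 = (1 - τ ^ 2) ^ n := by
    rw [hρ, ← pow_mul, mul_comm, pow_mul, Real.sq_sqrt hτ2']
  have hexp : Real.exp (-(3 * (n : ℝ) * τ ^ 2)) ≤ (1 - τ ^ 2) ^ n := by
    have ha : (0 : ℝ) < 1 + 3 * τ ^ 2 := by positivity
    have hb : 1 + 3 * τ ^ 2 ≤ Real.exp (3 * τ ^ 2) := by
      have := Real.add_one_le_exp (3 * τ ^ 2); linarith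
    have h1 : Real.exp (-(3 * τ ^ 2)) ≤ 1 - τ ^ 2 := by
      rw [Real.exp_neg]
      have hd : (Real.exp (3 * τ ^ 2))⁻¹ ≤ (1 + 3 * τ ^ 2)⁻¹ := inv_anti₀ ha hb
      have he : (1 + 3 * τ ^ 2)⁻¹ ≤ 1 - τ ^ 2 := by
        rw [inv_eq_one_div, div_le_iff₀ ha]
        nlinarith
      linarith
    have h2 : Real.exp (-(3 * (n : ℝ) * τ ^ 2)) = Real.exp (-(3 * τ ^ 2)) ^ n := by
      rw [← Real.exp_nat_mul]; ring_nf
    rw [h2]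
    exact pow_le_pow_left₀ (Real.exp_nonneg _) h1 n
  calc TVdist (Measure.pi fun _ : Fin n => D₁) (Measure.pi fun _ : Fin n => D₂) ^ 2
      ≤ t ^ 2 := pow_le_pow_left₀ htv0 htv 2
    _ ≤ 1 - (∑ s, Real.sqrt (p s * q s)) ^ 2 := hcs
    _ = 1 - (1 - τ ^ 2) ^ n := by rw [hρ2]
    _ ≤ 1 - Real.exp (-(3 * n * τ ^ 2)) := by linarith
end
end
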